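/- Let X be a finite quandle and suppose the action of Inn(X) on X is transitive. If every orbit of the diagonal Inn(X)-action on X × X is invariant under the coordinate swap τ(x,y) = (y,x), then the permutation representation of Inn(X) on C[X] is multiplicity free (i.e., the quandle ring C[X] decomposes as a direct sum of pairwise non-isomorphic simple right ideals). -/

import Mathlib

open Matrix


/-- Let `X` be a finite quandle (idempotent, right-distributive, with
bijective right translations `R y : x ↦ x ▷ y`) whose inner automorphism group
`Inn(X) = ⟨R y : y ∈ X⟩` acts transitively on `X`. If every orbit of the diagonal
`Inn(X)`-action on `X × X` is invariant under the coordinate swap (i.e. for all `x, y`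
there is `g ∈ Inn(X)` with `g x = y` and `g y = x`), then the permutation representation
of `Inn(X)` on `C[X] = (X → ℂ)` is multiplicity free: any two distinct invariant
irreducible subspaces are non-isomorphic as representations. -/
theorem stmt19 (X : Type*) [Fintype X] (op : X → X → X)
    (hidem : ∀ x, op x x = x)
    (hdistrib : ∀ x y z, op (op x y) z = op (op x z) (op y z))
    (R : X → Equiv.Perm X) (hR : ∀ x y, R y x = op x y)
    (htrans : ∀ x y : X, ∃ g ∈ Subgroup.closure (Set.range R), g x = y)
    (hswap : ∀ x y : X, ∃ g ∈ Subgroup.closure (Set.range R), g x = y ∧ g y = x) :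
    ∀ U V : Submodule ℂ (X → ℂ),
      (∀ g ∈ Subgroup.closure (Set.range R), ∀ f ∈ U, (f ∘ g.symm) ∈ U) →
      (∀ g ∈ Subgroup.closure (Set.range R), ∀ f ∈ V, (f ∘ g.symm) ∈ V) →
      U ≠ ⊥ →
      (∀ U' : Submodule ℂ (X → ℂ), U' ≤ U →
        (∀ g ∈ Subgroup.closure (Set.range R), ∀ f ∈ U', (f ∘ g.symm) ∈ U') →
        U' = ⊥ ∨ U' = U) →
      V ≠ ⊥ →
      (∀ V' : Submodule ℂ (X → ℂ), V' ≤ V →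
        (∀ g ∈ Subgroup.closure (Set.range R), ∀ f ∈ V', (f ∘ g.symm) ∈ V') →
        V' = ⊥ ∨ V' = V) →
      U ≠ V →
      ¬ ∃ e : (X → ℂ) →ₗ[ℂ] (X → ℂ),
          Submodule.map e U = V ∧ Set.InjOn e U ∧
          ∀ g ∈ Subgroup.closure (Set.range R), ∀ f ∈ U, e (f ∘ g.symm) = (e f) ∘ g.symm := by
  classical
  intro U V hUinv hVinv hUne hUirr hVne hVirr hUV
  rintro ⟨e, hmap, -, hequiv⟩
  set G := Subgroup.closure (Set.range R) with hGdef
  haveI : Fintype G := Fintype.ofFinite G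
  -- the permutation action as linear maps
  let ρ : Equiv.Perm X → ((X → ℂ) →ₗ[ℂ] (X → ℂ)) := fun g => LinearMap.funLeft ℂ ℂ ⇑g.symm
  have hρ_apply : ∀ (g : Equiv.Perm X) (f : X → ℂ), ρ g f = f ∘ ⇑g.symm := fun g f => rfl
  have hρ_mul : ∀ g h : Equiv.Perm X, ρ (g * h) = (ρ g).comp (ρ h) := by
    intro g h
    apply LinearMap.ext; intro f; funext x
    simp [ρ, LinearMap.funLeft_apply, Equiv.Perm.mul_def, Equiv.symm_trans_apply]
  have hρ_one : ρ 1 = LinearMap.id := by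
    apply LinearMap.ext; intro f; funext x
    simp [ρ, LinearMap.funLeft_apply]; rfl
  -- symmetric matrix lemma for intertwiners
  have hsym : ∀ B : (X → ℂ) →ₗ[ℂ] (X → ℂ),
      (∀ g ∈ G, (ρ g).comp B = B.comp (ρ g)) →
      (LinearMap.toMatrix' B)ᵀ = LinearMap.toMatrix' B := by
    intro B hB
    ext x y
    obtain ⟨g, hg, hgx, hgy⟩ := hswap x y
    have hδ : (ρ g) (fun j' => if j' = x then (1 : ℂ) else 0) =
        (fun j' => if j' = y then (1 : ℂ) else 0) := by
      funext z
      simp only [hρ_apply, Function.comp_apply]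
      have : g.symm z = x ↔ z = y := by
        constructor
        · intro h; rw [← hgx, ← h, Equiv.apply_symm_apply]
        · intro h; rw [h, ← hgx, Equiv.symm_apply_apply]
      by_cases h : z = y
      · subst h
        simp [this.2 rfl]
      · have hne : ¬ g.symm z = x := fun hc => h (this.1 hc)
        simp [h, hne]
    have hcomm := congrArg (fun T => T (fun j' => if j' = x then (1 : ℂ) else 0)) (hB g hg)
    simp only [LinearMap.comp_apply] at hcomm
    rw [hδ] at hcomm
    -- hcomm : ρ g (B δx) = B δy
    have hxy : g.symm x = y := by rw [← hgy, Equiv.symm_apply_apply]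
    have := congrArg (fun f => f x) hcomm
    simp only [hρ_apply, Function.comp_apply] at this
    rw [hxy] at this
    -- this : B δx y = B δy x
    rw [Matrix.transpose_apply, LinearMap.toMatrix'_apply, LinearMap.toMatrix'_apply]
    have hs : ∀ a : X, (Pi.single a (1 : ℂ) : X → ℂ) = fun j' => if j' = a then 1 else 0 :=
      fun a => funext fun j => Pi.single_apply a 1 j
    rw [hs, hs]
    exact this
  -- intertwiners commute
  have hcommute : ∀ B C : (X → ℂ) →ₗ[ℂ] (X → ℂ),
      (∀ g ∈ G, (ρ g).comp B = B.comp (ρ g)) →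
      (∀ g ∈ G, (ρ g).comp C = C.comp (ρ g)) →
      B.comp C = C.comp B := by
    intro B C hB hC
    have hBC : ∀ g ∈ G, (ρ g).comp (B.comp C) = (B.comp C).comp (ρ g) := by
      intro g hg
      rw [← LinearMap.comp_assoc, hB g hg, LinearMap.comp_assoc, hC g hg,
        LinearMap.comp_assoc]
    have h1 := hsym B hB
    have h2 := hsym C hC
    have h3 := hsym _ hBC
    apply LinearMap.toMatrix'.injective
    rw [LinearMap.toMatrix'_comp, LinearMap.toMatrix'_comp]
    have h3' : (LinearMap.toMatrix' B * LinearMap.toMatrix' C)ᵀ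
        = LinearMap.toMatrix' B * LinearMap.toMatrix' C := by
      rw [← LinearMap.toMatrix'_comp]; exact h3
    rw [← h3', Matrix.transpose_mul, h1, h2]
  -- equivariant projection onto U by averaging
  obtain ⟨W, hW⟩ := Submodule.exists_isCompl U
  let p : (X → ℂ) →ₗ[ℂ] (X → ℂ) := U.subtype ∘ₗ (U.projectionOnto W hW)
  have hpU : ∀ f, p f ∈ U := fun f => (U.projectionOnto W hW f).2
  have hp_id : ∀ f ∈ U, p f = f := by
    intro f hf
    have := Submodule.linearProjOfIsCompl_apply_left hW ⟨f, hf⟩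
    simp only [p, LinearMap.comp_apply, Submodule.subtype_apply]
    rw [show f = ((⟨f, hf⟩ : U) : X → ℂ) from rfl, this]
  let n : ℂ := (Fintype.card G : ℂ)
  have hn : n ≠ 0 := Nat.cast_ne_zero.2 Fintype.card_ne_zero
  let π : (X → ℂ) →ₗ[ℂ] (X → ℂ) :=
    n⁻¹ • ∑ g : G, (ρ (g : Equiv.Perm X)).comp (p.comp (ρ ((g : Equiv.Perm X)⁻¹)))
  have hπ_apply : ∀ f, π f = n⁻¹ • ∑ g : G,
      (ρ (g : Equiv.Perm X)) (p ((ρ ((g : Equiv.Perm X)⁻¹)) f)) := by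
    intro f
    simp [π, LinearMap.sum_apply]
  have hρ_memU : ∀ g ∈ G, ∀ f ∈ U, ρ g f ∈ U := by
    intro g hg f hf
    exact hUinv g hg f hf
  have hπU : ∀ f, π f ∈ U := by
    intro f
    rw [hπ_apply]
    refine Submodule.smul_mem _ _ (Submodule.sum_mem _ fun g _ => ?_)
    exact hρ_memU g g.2 _ (hpU _)
  have hπ_id : ∀ f ∈ U, π f = f := by
    intro f hf
    rw [hπ_apply]
    have : ∀ g : G, (ρ (g : Equiv.Perm X)) (p ((ρ ((g : Equiv.Perm X)⁻¹)) f)) = f := by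
      intro g
      have hg_inv : ((g : Equiv.Perm X)⁻¹) ∈ G := by
        exact_mod_cast (g⁻¹ : G).2
      rw [hp_id _ (hρ_memU _ hg_inv f hf)]
      have := congrArg (fun T => T f) (hρ_mul (g : Equiv.Perm X) ((g : Equiv.Perm X)⁻¹))
      simp only [LinearMap.comp_apply, mul_inv_cancel, hρ_one, LinearMap.id_apply] at this
      exact this.symm
    rw [Finset.sum_congr rfl (fun g _ => this g), Finset.sum_const, Finset.card_univ,
      ← Nat.cast_smul_eq_nsmul ℂ, smul_smul, inv_mul_cancel₀ hn, one_smul]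
  have hπ_comm : ∀ g ∈ G, (ρ g).comp π = π.comp (ρ g) := by
    intro h hh
    have hhmem : (⟨h, hh⟩ : G) ∈ (⊤ : Subgroup G) := trivial
    apply LinearMap.ext; intro f
    rw [LinearMap.comp_apply, LinearMap.comp_apply, hπ_apply, hπ_apply]
    rw [LinearMap.map_smul, map_sum]
    congr 1
    refine Fintype.sum_equiv (Equiv.mulLeft (⟨h, hh⟩ : G)) _ _ ?_
    intro g
    simp only [Equiv.coe_mulLeft]
    have e1 : ((((⟨h, hh⟩ : G) * g : G) : Equiv.Perm X)) = h * (g : Equiv.Perm X) := rfl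
    rw [e1]
    have harg : (h * (g : Equiv.Perm X))⁻¹ * h = ((g : Equiv.Perm X))⁻¹ := by group
    have inner : (ρ ((h * (g : Equiv.Perm X))⁻¹)) ((ρ h) f)
        = (ρ ((g : Equiv.Perm X)⁻¹)) f := by
      rw [show (ρ ((h * (g : Equiv.Perm X))⁻¹)) ((ρ h) f)
          = (ρ (((h * (g : Equiv.Perm X))⁻¹) * h)) f from by rw [hρ_mul]; rfl, harg]
    rw [inner, hρ_mul]
    rfl
  -- A = e ∘ π is an intertwiner
  let A : (X → ℂ) →ₗ[ℂ] (X → ℂ) := e ∘ₗ π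
  have hA_comm : ∀ g ∈ G, (ρ g).comp A = A.comp (ρ g) := by
    intro g hg
    apply LinearMap.ext; intro f
    simp only [A, LinearMap.comp_apply]
    have h1 : π ((ρ g) f) = (ρ g) (π f) := by
      have := congrArg (fun T => T f) (hπ_comm g hg)
      simpa using this.symm
    rw [h1]
    have h2 := hequiv g hg (π f) (hπU f)
    rw [hρ_apply, hρ_apply, h2]
  -- π and A commute, hence range of A is in U
  have hπA := hcommute π A hπ_comm hA_comm
  have hAU : ∀ f, A f ∈ U := by
    intro f
    have := congrArg (fun T => T f) hπA
    simp only [LinearMap.comp_apply] at this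
    -- this : π (A f) = A (π f)
    have h2 : π (π f) = π f := hπ_id _ (hπU f)
    have h3 : A (π f) = A f := by
      simp only [A, LinearMap.comp_apply, h2]
    rw [h3] at this
    rw [← this]
    exact hπU _
  -- hence V ≤ U
  have hVU : V ≤ U := by
    intro v hv
    rw [← hmap] at hv
    obtain ⟨u, hu, rfl⟩ := hv
    have : e u = A u := by
      simp only [A, LinearMap.comp_apply, hπ_id u hu]
    rw [this]
    exact hAU u
  rcases hUirr V hVU hVinv with h | h
  · exact hVne h
  · exact hUV h.symm
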